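/- For a fixed vector g ∈ R^n and B = [z₁,...,z_k] with columns i.i.d. N(0, I_n), E[‖BBᵀg‖²] = k(n+k+1)·‖g‖². -/

import Mathlib

open MeasureTheory ProbabilityTheory Matrix
open Real
open scoped NNReal ENNReal

/-- The standard Gaussian measure `N(0, I_n)` on `ℝⁿ`. -/
noncomputable def stdGaussian (n : ℕ) : Measure (Fin n → ℝ) :=
  Measure.pi fun _ => gaussianReal 0 1

/-- The law of `k` i.i.d. `N(0, I_n)` vectors `z₁, …, z_k`. -/
noncomputable def stdGaussianVecs (k n : ℕ) : Measure (Fin k → Fin n → ℝ) :=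
  Measure.pi fun _ => stdGaussian n

/-- The `n × k` matrix `B = [z₁, …, z_k]` whose columns are the vectors `z i`. -/
def basisMat {k n : ℕ} (z : Fin k → Fin n → ℝ) : Matrix (Fin n) (Fin k) ℝ :=
  Matrix.of fun a i => z i a

section aux


lemma integrable_pow_exp (m : ℕ) :
    Integrable fun x : ℝ => x ^ m * Real.exp (-(x ^ 2 / 2)) := by
  have h := integrable_rpow_mul_exp_neg_mul_sq (b := (1:ℝ)/2) (by norm_num)
    (s := (m : ℝ)) (by have : (0:ℝ) ≤ m := Nat.cast_nonneg m; linarith)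
  simp only [Real.rpow_natCast] at h
  convert h using 2 with x
  ring_nf

noncomputable def Igauss (m : ℕ) : ℝ := ∫ x : ℝ, x ^ m * Real.exp (-(x ^ 2 / 2))

lemma Igauss_zero : Igauss 0 = Real.sqrt (2 * π) := by
  have h := integral_gaussian ((1:ℝ)/2)
  rw [Igauss]
  simp only [pow_zero, one_mul]
  rw [show (fun x : ℝ => Real.exp (-(x ^ 2 / 2))) = fun x : ℝ => Real.exp (-(1/2) * x ^ 2) by
    funext x; ring_nf]
  rw [h]
  rw [show π / (1/2 : ℝ) = 2 * π by ring]

lemma Igauss_one : Igauss 1 = 0 := by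
  have hder : ∀ x : ℝ, HasDerivAt (fun x : ℝ => -Real.exp (-(x ^ 2 / 2)))
      (x ^ 1 * Real.exp (-(x ^ 2 / 2))) x := by
    intro x
    have h1 : HasDerivAt (fun x : ℝ => -(x ^ 2 / 2)) (-x) x := by
      have := (hasDerivAt_pow 2 x).div_const 2
      have := this.neg
      refine this.congr_deriv ?_
      push_cast; ring
    have := (h1.exp).neg
    refine this.congr_deriv ?_
    simp; ring
  have := integral_eq_zero_of_hasDerivAt_of_integrable hder (integrable_pow_exp 1)
    ((integrable_pow_exp 0).neg.congr (by filter_upwards with x; simp))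
  simpa [Igauss] using this

lemma Igauss_rec (m : ℕ) : Igauss (m + 2) = (m + 1) * Igauss m := by
  have hder : ∀ x : ℝ, HasDerivAt (fun x : ℝ => x ^ (m + 1) * Real.exp (-(x ^ 2 / 2)))
      ((m + 1) * (x ^ m * Real.exp (-(x ^ 2 / 2))) - x ^ (m + 2) * Real.exp (-(x ^ 2 / 2))) x := by
    intro x
    have h1 : HasDerivAt (fun x : ℝ => -(x ^ 2 / 2)) (-x) x := by
      have := ((hasDerivAt_pow 2 x).div_const 2).neg
      refine this.congr_deriv ?_
      push_cast; ring
    have h2 := (hasDerivAt_pow (m + 1) x).mul h1.exp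
    refine h2.congr_deriv ?_
    push_cast; ring
  have hint : Integrable fun x : ℝ =>
      (m + 1 : ℝ) * (x ^ m * Real.exp (-(x ^ 2 / 2))) - x ^ (m + 2) * Real.exp (-(x ^ 2 / 2)) :=
    ((integrable_pow_exp m).const_mul _).sub (integrable_pow_exp (m + 2))
  have h0 := integral_eq_zero_of_hasDerivAt_of_integrable hder hint (integrable_pow_exp (m + 1))
  rw [integral_sub ((integrable_pow_exp m).const_mul _) (integrable_pow_exp (m + 2)),
    integral_const_mul] at h0
  have : (m + 1 : ℝ) * Igauss m - Igauss (m + 2) = 0 := h0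
  linarith



lemma gaussianReal_eq : gaussianReal 0 1 =
    volume.withDensity fun x => ((Real.toNNReal (gaussianPDFReal 0 1 x) : ℝ≥0) : ℝ≥0∞) := by
  rw [gaussianReal_of_var_ne_zero 0 one_ne_zero]
  rfl

lemma pdf_eq (x : ℝ) : gaussianPDFReal 0 1 x = (Real.sqrt (2 * π))⁻¹ * Real.exp (-(x ^ 2 / 2)) := by
  rw [gaussianPDFReal]
  push_cast
  rw [mul_one, sub_zero, show -x^2/(2*1) = -(x^2/2) by ring]

lemma integrable_pow_gauss (m : ℕ) : Integrable (fun x : ℝ => x ^ m) (gaussianReal 0 1) := by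
  rw [gaussianReal_of_var_ne_zero 0 one_ne_zero,
    integrable_withDensity_iff (measurable_gaussianPDF 0 1)
      (Filter.Eventually.of_forall fun x => ENNReal.ofReal_lt_top)]
  have : (fun x : ℝ => x ^ m * (gaussianPDF 0 1 x).toReal)
      = fun x : ℝ => (Real.sqrt (2 * π))⁻¹ * (x ^ m * Real.exp (-(x ^ 2 / 2))) := by
    funext x
    rw [gaussianPDF, ENNReal.toReal_ofReal (gaussianPDFReal_nonneg 0 1 x), pdf_eq]
    ring
  rw [this]
  exact (integrable_pow_exp m).const_mul _

lemma Mgauss_eq (m : ℕ) :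
    ∫ x, x ^ m ∂(gaussianReal 0 1) = (Real.sqrt (2 * π))⁻¹ * Igauss m := by
  rw [gaussianReal_eq, integral_withDensity_eq_integral_smul
    ((measurable_gaussianPDFReal 0 1).real_toNNReal)]
  rw [Igauss, ← integral_const_mul]
  congr 1
  funext x
  rw [NNReal.smul_def, smul_eq_mul, Real.coe_toNNReal _ (gaussianPDFReal_nonneg 0 1 x), pdf_eq]
  ring

noncomputable def Mgauss (m : ℕ) : ℝ := ∫ x, x ^ m ∂(gaussianReal 0 1)

lemma sqrt2pi_pos : (0:ℝ) < Real.sqrt (2 * π) := Real.sqrt_pos.mpr (by positivity)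

lemma Mgauss_zero : Mgauss 0 = 1 := by
  rw [Mgauss, Mgauss_eq, Igauss_zero, inv_mul_cancel₀ (ne_of_gt sqrt2pi_pos)]
lemma Mgauss_one : Mgauss 1 = 0 := by rw [Mgauss, Mgauss_eq, Igauss_one, mul_zero]
lemma Mgauss_two : Mgauss 2 = 1 := by
  rw [Mgauss, Mgauss_eq, Igauss_rec 0, Igauss_zero]
  rw [show ((0:ℕ) + 1 : ℝ) * Real.sqrt (2*π) = Real.sqrt (2*π) by norm_num]
  exact inv_mul_cancel₀ (ne_of_gt sqrt2pi_pos)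
lemma Mgauss_three : Mgauss 3 = 0 := by
  rw [Mgauss, Mgauss_eq, Igauss_rec 1, Igauss_one, mul_zero, mul_zero]
lemma Mgauss_four : Mgauss 4 = 3 := by
  rw [Mgauss, Mgauss_eq, Igauss_rec 2, Igauss_rec 0, Igauss_zero]
  have h := ne_of_gt sqrt2pi_pos
  field_simp
  ring

lemma Mg0 : ∫ x : ℝ, x ^ 0 ∂(gaussianReal 0 1) = 1 := Mgauss_zero
lemma Mg1 : ∫ x : ℝ, x ^ 1 ∂(gaussianReal 0 1) = 0 := Mgauss_one
lemma Mg2 : ∫ x : ℝ, x ^ 2 ∂(gaussianReal 0 1) = 1 := Mgauss_two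
lemma Mg3 : ∫ x : ℝ, x ^ 3 ∂(gaussianReal 0 1) = 0 := Mgauss_three
lemma Mg4 : ∫ x : ℝ, x ^ 4 ∂(gaussianReal 0 1) = 3 := Mgauss_four


lemma Mg1' : ∫ x : ℝ, x ∂(gaussianReal 0 1) = 0 := by
  rw [show (fun x : ℝ => x) = fun x : ℝ => x ^ 1 from funext fun x => (pow_one x).symm]
  exact Mg1
lemma integral_pi_prod {ι : Type*} [Fintype ι] {E : Type*} [MeasurableSpace E]
    (μ : Measure E) [SigmaFinite μ] (f : ι → E → ℝ) :
    ∫ x : ι → E, ∏ i, f i (x i) ∂(Measure.pi fun _ => μ) = ∏ i, ∫ x, f i x ∂μ := by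
  letI : MeasureSpace E := ⟨μ⟩
  exact MeasureTheory.integral_fintype_prod_eq_prod f

lemma integrable_pi_prod {ι : Type*} [Fintype ι] {E : Type*} [MeasurableSpace E]
    (μ : Measure E) [SigmaFinite μ] (f : ι → E → ℝ) (hf : ∀ i, Integrable (f i) μ) :
    Integrable (fun x : ι → E => ∏ i, f i (x i)) (Measure.pi fun _ => μ) := by
  letI : MeasureSpace E := ⟨μ⟩
  exact MeasureTheory.Integrable.fintype_prod hf

instance (n : ℕ) : IsProbabilityMeasure (stdGaussian n) := by
  rw [_root_.stdGaussian]; infer_instance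

lemma repr_two {n : ℕ} (a b : Fin n) (x : Fin n → ℝ) :
    x a * x b = ∏ d, x d ^ ((if a = d then 1 else 0) + (if b = d then 1 else 0)) := by
  simp only [pow_add, Finset.prod_mul_distrib, pow_ite, pow_one, pow_zero]
  rw [Finset.prod_ite_eq, Finset.prod_ite_eq]
  simp

lemma repr_four {n : ℕ} (a b c : Fin n) (x : Fin n → ℝ) :
    (x a * x b) * (x a * x c) = ∏ d, x d ^
      (((if a = d then 1 else 0) + (if b = d then 1 else 0)) +
       ((if a = d then 1 else 0) + (if c = d then 1 else 0))) := by
  simp only [pow_add, Finset.prod_mul_distrib, pow_ite, pow_one, pow_zero]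
  simp

lemma integrable_two {n : ℕ} (a b : Fin n) :
    Integrable (fun x : Fin n → ℝ => x a * x b) (stdGaussian n) := by
  have := integrable_pi_prod (gaussianReal 0 1)
    (fun d (x : ℝ) => x ^ ((if a = d then 1 else 0) + (if b = d then 1 else 0)))
    (fun d => integrable_pow_gauss _)
  rw [_root_.stdGaussian]
  exact this.congr (Filter.Eventually.of_forall fun x => (repr_two a b x).symm)

lemma integrable_four {n : ℕ} (a b c : Fin n) :
    Integrable (fun x : Fin n → ℝ => (x a * x b) * (x a * x c)) (stdGaussian n) := by
  have := integrable_pi_prod (gaussianReal 0 1)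
    (fun d (x : ℝ) => x ^ (((if a = d then 1 else 0) + (if b = d then 1 else 0)) +
       ((if a = d then 1 else 0) + (if c = d then 1 else 0))))
    (fun d => integrable_pow_gauss _)
  rw [_root_.stdGaussian]
  exact this.congr (Filter.Eventually.of_forall fun x => (repr_four a b c x).symm)

lemma int_two {n : ℕ} (a b : Fin n) :
    ∫ x, x a * x b ∂(stdGaussian n) = if a = b then 1 else 0 := by
  rw [_root_.stdGaussian]
  simp_rw [repr_two a b]
  rw [integral_pi_prod (gaussianReal 0 1)
    (fun d (x : ℝ) => x ^ ((if a = d then 1 else 0) + (if b = d then 1 else 0)))]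
  by_cases hab : a = b
  · subst hab
    rw [if_pos rfl]
    refine Finset.prod_eq_one fun d _ => ?_
    by_cases h : a = d
    · norm_num [h, Mg2]
    · norm_num [h, Mg0]
  · rw [if_neg hab]
    refine Finset.prod_eq_zero (Finset.mem_univ a) ?_
    norm_num [show ¬ b = a from fun h => hab h.symm, Mg1, Mg1']

lemma int_four {n : ℕ} (a b c : Fin n) :
    ∫ x, (x a * x b) * (x a * x c) ∂(stdGaussian n)
      = (if b = c then 1 else 0) + 2 * ((if a = b then 1 else 0) * (if a = c then 1 else 0)) := by
  rw [_root_.stdGaussian]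
  simp_rw [repr_four a b c]
  rw [integral_pi_prod (gaussianReal 0 1)
    (fun d (x : ℝ) => x ^ (((if a = d then 1 else 0) + (if b = d then 1 else 0)) +
       ((if a = d then 1 else 0) + (if c = d then 1 else 0))))]
  by_cases hab : a = b <;> by_cases hac : a = c
  · -- a = b, a = c
    subst hab; subst hac
    norm_num
    have h1 : ∀ d, (∫ x : ℝ, x ^ (((if a = d then 1 else 0) + (if a = d then 1 else 0)) +
        ((if a = d then 1 else 0) + (if a = d then 1 else 0))) ∂(gaussianReal 0 1))
        = if a = d then (3:ℝ) else 1 := by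
      intro d
      by_cases h : a = d
      · norm_num [h, Mg4]
      · norm_num [h, Mg0]
    rw [Finset.prod_congr rfl fun d _ => h1 d, Finset.prod_ite_eq, if_pos (Finset.mem_univ a)]
  · -- a = b, a ≠ c
    subst hab
    have h0 := Finset.prod_eq_zero (Finset.mem_univ a)
      (f := fun d => (∫ x : ℝ, x ^ (((if a = d then 1 else 0) + (if a = d then 1 else 0)) +
        ((if a = d then 1 else 0) + (if c = d then 1 else 0))) ∂(gaussianReal 0 1)))
      (by norm_num [show ¬ c = a from fun h => hac h.symm, Mg3])
    rw [h0]
    simp [hac]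
  · -- a = c, a ≠ b
    subst hac
    have h0 := Finset.prod_eq_zero (Finset.mem_univ a)
      (f := fun d => (∫ x : ℝ, x ^ (((if a = d then 1 else 0) + (if b = d then 1 else 0)) +
        ((if a = d then 1 else 0) + (if a = d then 1 else 0))) ∂(gaussianReal 0 1)))
      (by norm_num [show ¬ b = a from fun h => hab h.symm, Mg3])
    rw [h0]
    simp [hab, show ¬ b = a from fun h => hab h.symm]
  · by_cases hbc : b = c
    · subst hbc
      rw [if_pos rfl, if_neg hab]
      rw [show ((1:ℝ) + 2 * (0 * 0)) = 1 by norm_num]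
      refine Finset.prod_eq_one fun d _ => ?_
      by_cases h1 : a = d <;> by_cases h2 : b = d
      · exact absurd (h1.trans h2.symm) hab
      · norm_num [h1, h2, Mg2]
      · norm_num [h1, h2, Mg2]
      · norm_num [h1, h2, Mg0]
    · rw [if_neg hbc, if_neg hab, if_neg hac]
      have h0 := Finset.prod_eq_zero (Finset.mem_univ b)
        (f := fun d => (∫ x : ℝ, x ^ (((if a = d then 1 else 0) + (if b = d then 1 else 0)) +
          ((if a = d then 1 else 0) + (if c = d then 1 else 0))) ∂(gaussianReal 0 1)))
        (by norm_num [show ¬ a = b from hab, show ¬ c = b from fun h => hbc h.symm, Mg1, Mg1'])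
      rw [h0]
      ring



section Outer
variable {k n : ℕ} (F G : (Fin n → ℝ) → ℝ)

lemma repr_outer (i j : Fin k) (z : Fin k → Fin n → ℝ) :
    F (z i) * G (z j) =
      ∏ i', F (z i') ^ (if i = i' then 1 else 0) * G (z i') ^ (if j = i' then 1 else 0) := by
  simp only [Finset.prod_mul_distrib, pow_ite, pow_one, pow_zero]
  simp

lemma outer_integrable (hF : Integrable F (stdGaussian n)) (hG : Integrable G (stdGaussian n))
    (hFG : Integrable (fun x => F x * G x) (stdGaussian n)) (i j : Fin k) :
    Integrable (fun z : Fin k → Fin n → ℝ => F (z i) * G (z j)) (stdGaussianVecs k n) := by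
  have h := integrable_pi_prod (stdGaussian n)
    (fun i' (x : Fin n → ℝ) => F x ^ (if i = i' then 1 else 0) * G x ^ (if j = i' then 1 else 0))
    (fun i' => by
      by_cases h1 : i = i' <;> by_cases h2 : j = i'
      · simpa [h1, h2] using hFG
      · simpa [h1, h2] using hF
      · simpa [h1, h2] using hG
      · simpa [h1, h2] using (integrable_const (1:ℝ)))
  rw [stdGaussianVecs]
  exact h.congr (Filter.Eventually.of_forall fun z => (repr_outer F G i j z).symm)

lemma outer_integral (hF : Integrable F (stdGaussian n)) (hG : Integrable G (stdGaussian n))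
    (i j : Fin k) :
    ∫ z, F (z i) * G (z j) ∂(stdGaussianVecs k n)
      = if i = j then ∫ x, F x * G x ∂(stdGaussian n)
        else (∫ x, F x ∂(stdGaussian n)) * (∫ x, G x ∂(stdGaussian n)) := by
  rw [stdGaussianVecs]
  simp_rw [repr_outer F G i j]
  rw [integral_pi_prod (stdGaussian n)
    (fun i' (x : Fin n → ℝ) => F x ^ (if i = i' then 1 else 0) * G x ^ (if j = i' then 1 else 0))]
  by_cases hij : i = j
  · subst hij
    rw [if_pos rfl]
    have h1 : ∀ i', (∫ x, F x ^ (if i = i' then 1 else 0) * G x ^ (if i = i' then 1 else 0)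
        ∂(stdGaussian n)) = if i = i' then ∫ x, F x * G x ∂(stdGaussian n) else 1 := by
      intro i'
      by_cases h : i = i' <;> simp [h]
    rw [Finset.prod_congr rfl fun i' _ => h1 i', Finset.prod_ite_eq, if_pos (Finset.mem_univ i)]
  · rw [if_neg hij]
    have h1 : ∀ i', (∫ x, F x ^ (if i = i' then 1 else 0) * G x ^ (if j = i' then 1 else 0)
        ∂(stdGaussian n)) = (if i = i' then ∫ x, F x ∂(stdGaussian n) else 1) *
          (if j = i' then ∫ x, G x ∂(stdGaussian n) else 1) := by
      intro i'
      by_cases h1 : i = i' <;> by_cases h2 : j = i'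
      · exact absurd (h1.trans h2.symm) hij
      · simp [h1, h2]
      · simp [h1, h2]
      · simp [h1, h2]
    rw [Finset.prod_congr rfl fun i' _ => h1 i', Finset.prod_mul_distrib,
      Finset.prod_ite_eq, Finset.prod_ite_eq, if_pos (Finset.mem_univ i),
      if_pos (Finset.mem_univ j)]
end Outer


end aux

/-- For fixed `g ∈ ℝⁿ` and `B = [z₁, …, z_k]` with i.i.d. `N(0, I_n)` columns,
`E[‖BBᵀg‖²] = k(n+k+1)‖g‖²`. -/
theorem expectation_normSq_BBtg (k n : ℕ) (g : Fin n → ℝ) :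
    ∫ z, (∑ a, ((basisMat z * (basisMat z)ᵀ).mulVec g a) ^ 2) ∂(stdGaussianVecs k n)
      = (k : ℝ) * ((n : ℝ) + (k : ℝ) + 1) * ∑ a, g a ^ 2 := by
  have hpt : ∀ z : Fin k → Fin n → ℝ,
      (∑ a, ((basisMat z * (basisMat z)ᵀ).mulVec g a) ^ 2)
        = ∑ a, ∑ i, ∑ j, ∑ b, ∑ c, g b * g c * ((z i a * z i b) * (z j a * z j c)) := by
    intro z
    refine Finset.sum_congr rfl fun a _ => ?_
    have h1 : ((basisMat z * (basisMat z)ᵀ).mulVec g a) = ∑ i, ∑ b, z i a * z i b * g b := by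
      simp only [Matrix.mulVec, Matrix.mul_apply, dotProduct, basisMat, Matrix.transpose_apply,
        Matrix.of_apply, Finset.sum_mul]
      rw [Finset.sum_comm]
    rw [h1, sq, Finset.sum_mul_sum]
    refine Finset.sum_congr rfl fun i _ => Finset.sum_congr rfl fun j _ => ?_
    rw [Finset.sum_mul_sum]
    exact Finset.sum_congr rfl fun b _ => Finset.sum_congr rfl fun c _ => by ring
  simp_rw [hpt]
  have hTint : ∀ (a : Fin n) (i j : Fin k) (b c : Fin n),
      Integrable (fun z : Fin k → Fin n → ℝ => g b * g c * ((z i a * z i b) * (z j a * z j c)))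
        (stdGaussianVecs k n) := by
    intro a i j b c
    exact (outer_integrable (fun x => x a * x b) (fun x => x a * x c)
      (integrable_two a b) (integrable_two a c) (integrable_four a b c) i j).const_mul _
  rw [integral_finset_sum _ fun a _ => integrable_finset_sum _ fun i _ =>
    integrable_finset_sum _ fun j _ => integrable_finset_sum _ fun b _ =>
    integrable_finset_sum _ fun c _ => hTint a i j b c]
  simp_rw [integral_finset_sum _ fun i (_ : i ∈ Finset.univ) => integrable_finset_sum _ fun j _ =>
    integrable_finset_sum _ fun b _ => integrable_finset_sum _ fun c _ => hTint _ i j b _,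
    integral_finset_sum _ fun j (_ : j ∈ Finset.univ) => integrable_finset_sum _ fun b _ =>
    integrable_finset_sum _ fun c _ => hTint _ _ j b _,
    integral_finset_sum _ fun b (_ : b ∈ Finset.univ) => integrable_finset_sum _ fun c _ =>
    hTint _ _ _ b _,
    integral_finset_sum _ fun c (_ : c ∈ Finset.univ) => hTint _ _ _ _ c,
    integral_const_mul]
  have hJ : ∀ (a : Fin n) (i j : Fin k) (b c : Fin n),
      ∫ z, (z i a * z i b) * (z j a * z j c) ∂(stdGaussianVecs k n)
        = if i = j then ((if b = c then 1 else 0)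
            + 2 * ((if a = b then 1 else 0) * (if a = c then 1 else 0)))
          else ((if a = b then 1 else 0) * (if a = c then 1 else 0)) := by
    intro a i j b c
    have := outer_integral (fun x : Fin n → ℝ => x a * x b) (fun x : Fin n → ℝ => x a * x c)
      (integrable_two a b) (integrable_two a c) i j
    rw [this, int_four, int_two, int_two]
  simp_rw [hJ]
  -- now pure Finset computation
  set S := ∑ a, g a ^ 2 with hS
  have hinner : ∀ (a : Fin n) (i j : Fin k),
      (∑ b, ∑ c, g b * g c * (if i = j then ((if b = c then 1 else 0)
          + 2 * ((if a = b then 1 else 0) * (if a = c then 1 else 0)))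
        else ((if a = b then 1 else 0) * (if a = c then 1 else 0))))
      = if i = j then S + 2 * g a ^ 2 else g a ^ 2 := by
    intro a i j
    by_cases hij : i = j
    · simp only [if_pos hij]
      have : ∀ b : Fin n, (∑ c, g b * g c * ((if b = c then 1 else 0)
          + 2 * ((if a = b then 1 else 0) * (if a = c then 1 else 0))))
          = g b * g b + 2 * ((if a = b then 1 else 0) * (g b * g a)) := by
        intro b
        simp [mul_add, Finset.sum_add_distrib, mul_ite, mul_zero, mul_one,
          Finset.mul_sum, Finset.sum_ite_eq, mul_comm, mul_assoc, mul_left_comm]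
        try ring
      rw [Finset.sum_congr rfl fun b _ => this b]
      rw [Finset.sum_add_distrib]
      congr 1
      · rw [hS]; exact Finset.sum_congr rfl fun b _ => by ring
      · rw [← Finset.mul_sum]
        have : ∀ b : Fin n, ((if a = b then (1:ℝ) else 0) * (g b * g a))
            = if a = b then g b * g a else 0 := fun b => by split <;> ring
        rw [Finset.sum_congr rfl fun b _ => this b, Finset.sum_ite_eq,
          if_pos (Finset.mem_univ a)]
        ring
    · simp only [if_neg hij]
      have : ∀ b : Fin n, (∑ c, g b * g c * ((if a = b then (1:ℝ) else 0)
          * (if a = c then 1 else 0))) = if a = b then g b * g a else 0 := by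
        intro b
        have h2 : ∀ c : Fin n, g b * g c * ((if a = b then (1:ℝ) else 0) * (if a = c then 1 else 0))
            = if a = c then (if a = b then g b * g c else 0) else 0 := by
          intro c; split <;> split <;> ring
        rw [Finset.sum_congr rfl fun c _ => h2 c, Finset.sum_ite_eq, if_pos (Finset.mem_univ a)]
      rw [Finset.sum_congr rfl fun b _ => this b, Finset.sum_ite_eq, if_pos (Finset.mem_univ a)]
      ring
  simp_rw [hinner]
  have houter : ∀ a : Fin n, (∑ i : Fin k, ∑ j : Fin k,
      if i = j then S + 2 * g a ^ 2 else g a ^ 2)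
      = (k : ℝ) * (S + 2 * g a ^ 2) + ((k : ℝ) * (k : ℝ) - (k : ℝ)) * g a ^ 2 := by
    intro a
    have h1 : ∀ i : Fin k, (∑ j : Fin k, if i = j then S + 2 * g a ^ 2 else g a ^ 2)
        = (k : ℝ) * g a ^ 2 + (S + 2 * g a ^ 2 - g a ^ 2) := by
      intro i
      have : ∀ j : Fin k, (if i = j then S + 2 * g a ^ 2 else g a ^ 2)
          = g a ^ 2 + (if i = j then S + 2 * g a ^ 2 - g a ^ 2 else 0) := by
        intro j; split <;> ring
      rw [Finset.sum_congr rfl fun j _ => this j, Finset.sum_add_distrib, Finset.sum_const,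
        Finset.sum_ite_eq, if_pos (Finset.mem_univ i), Finset.card_univ, Fintype.card_fin,
        nsmul_eq_mul]
    rw [Finset.sum_congr rfl fun i _ => h1 i, Finset.sum_const, Finset.card_univ,
      Fintype.card_fin, nsmul_eq_mul]
    ring
  rw [Finset.sum_congr rfl fun a _ => houter a, Finset.sum_add_distrib]
  have h1 : ∑ x : Fin n, (k:ℝ) * (S + 2 * g x ^ 2) = (k:ℝ) * ((n:ℝ) * S + 2 * S) := by
    rw [← Finset.mul_sum]
    congr 1
    rw [Finset.sum_add_distrib, Finset.sum_const, Finset.card_univ, Fintype.card_fin,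
      nsmul_eq_mul, ← Finset.mul_sum, ← hS]
  have h2 : ∑ x : Fin n, ((k:ℝ) * (k:ℝ) - (k:ℝ)) * g x ^ 2 = ((k:ℝ) * (k:ℝ) - (k:ℝ)) * S := by
    rw [← Finset.mul_sum, ← hS]
  rw [h1, h2]
  ring
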